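/- In the two-sided bipartite market with agents {1,2,3} and {4,5,6} where, asymmetrically, agent 1 has utility 1 only for 4; agent 2 has utility 1 for 5 and 6; agent 4 has utility 1 for 2; all other utilities are 0 (as in the directed-edge figure), no fractional perfect matching is simultaneously envy-free and Pareto-optimal. -/
import Mathlib


def isPM {n : ℕ} (x : Fin n → Fin n → ℝ) : Prop :=
  (∀ i j, 0 ≤ x i j) ∧ (∀ i, ∑ j, x i j = 1) ∧ (∀ j, ∑ i, x i j = 1)

/-- Utility of agent `i ∈ A` in a two-sided market: `u i · x i`. -/
def utilA {n : ℕ} (u x : Fin n → Fin n → ℝ) (i : Fin n) : ℝ := ∑ j, u i j * x i j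

/-- Utility of agent `j ∈ B`: `w j · x_j = Σ_i w j i * x i j`. -/
def utilB {n : ℕ} (w : Fin n → Fin n → ℝ) (x : Fin n → Fin n → ℝ) (j : Fin n) : ℝ :=
  ∑ i, w j i * x i j

/-- Two-sided envy-freeness: no agent on either side prefers the bundle of another
agent on their own side. -/
def EnvyFree2 {n : ℕ} (u w x : Fin n → Fin n → ℝ) : Prop :=
  (∀ i i' : Fin n, ∑ j, u i j * x i' j ≤ utilA u x i) ∧
  (∀ j j' : Fin n, ∑ i, w j i * x i j' ≤ utilB w x j)

/-- Two-sided Pareto-optimality over fractional perfect matchings. -/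
def ParetoOptimal2 {n : ℕ} (u w x : Fin n → Fin n → ℝ) : Prop :=
  ¬ ∃ y, isPM y ∧
    (∀ i, utilA u x i ≤ utilA u y i) ∧ (∀ j, utilB w x j ≤ utilB w y j) ∧
    ((∃ i, utilA u x i < utilA u y i) ∨ (∃ j, utilB w x j < utilB w y j))

/-- Asymmetric {0,1} utilities of side A over side B (A = {1,2,3} ↦ {0,1,2},
B = {4,5,6} ↦ {0,1,2}): agent 1 likes 4; agent 2 likes 5 and 6. -/
def u13 : Fin 3 → Fin 3 → ℝ := ![![1, 0, 0], ![0, 1, 1], ![0, 0, 0]]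

/-- Utilities of side B over side A: agent 4 likes 2. -/
def w13 : Fin 3 → Fin 3 → ℝ := ![![0, 1, 0], ![0, 0, 0], ![0, 0, 0]]

/-- in this asymmetric two-sided {0,1} instance, no fractional perfect
matching is simultaneously envy-free and Pareto-optimal. -/
theorem no_efpo_asymmetric :
    ¬ ∃ x : Fin 3 → Fin 3 → ℝ, isPM x ∧ EnvyFree2 u13 w13 x ∧ ParetoOptimal2 u13 w13 x := by
  rintro ⟨x, ⟨hnn, hrow, hcol⟩, ⟨hEA, hEB⟩, hPO⟩
  have c0 := hcol 0
  have r1 := hrow 1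
  have r2 := hrow 2
  simp [Fin.sum_univ_three] at c0 r1 r2
  -- envy facts
  have e01 := hEA 0 1
  have e02 := hEA 0 2
  have e12 := hEA 1 2
  have b1 := hEB 0 1
  have b2 := hEB 0 2
  simp [utilA, utilB, u13, w13, Fin.sum_univ_three] at e01 e02 e12 b1 b2
  -- derive x 1 0 = 1/3 and x 0 0 = 1/3
  have h10 : x 1 0 = 1/3 := by linarith
  have h00 : x 0 0 = 1/3 := by linarith
  apply hPO
  refine ⟨![![2/3, 1/6, 1/6], ![1/3, 1/3, 1/3], ![0, 1/2, 1/2]], ⟨?_, ?_, ?_⟩, ?_, ?_, ?_⟩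
  · intro i j; fin_cases i <;> fin_cases j <;> norm_num
  · intro i; fin_cases i <;> simp [Fin.sum_univ_three] <;> norm_num
  · intro j; fin_cases j <;> simp [Fin.sum_univ_three] <;> norm_num
  · intro i; fin_cases i <;>
      simp [utilA, u13, Fin.sum_univ_three, Matrix.cons_val_zero, Matrix.cons_val_one, Matrix.head_cons, Matrix.cons_val_two, Matrix.tail_cons, Matrix.vecHead, Matrix.vecTail, h00, h10] <;> linarith
  · intro j; fin_cases j <;>
      simp [utilB, w13, Fin.sum_univ_three, Matrix.cons_val_zero, Matrix.cons_val_one, Matrix.head_cons, Matrix.cons_val_two, Matrix.tail_cons, Matrix.vecHead, Matrix.vecTail, h10] <;> linarith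
  · left; exact ⟨0, by simp [utilA, u13, Fin.sum_univ_three, Matrix.vecHead, Matrix.vecTail, h00]; norm_num⟩
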